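/- Let d : ℂ × (−ε₀,ε₀) → ℂ satisfy d(z,ε) = z + ε^d·M(z) + O(ε^{d+1}) uniformly on a compact set K ⊆ ℂ, where M is analytic and not identically zero on a connected neighborhood of K. If M has exactly N zeros (counted with multiplicity) in the interior of K and no zeros on its boundary, then for all sufficiently small ε ≠ 0 the function z ↦ d(z,ε) − z has at most N zeros in the interior of K. -/

import Mathlib

open Metric


lemma key_ineq (A c r R : ℝ) (N kk : ℕ) (hA : 1 ≤ A) (hc : 0 < c) (hR : 0 < R)
    (hR1 : R ≤ 1) (hr0 : 0 < r)
    (hrc : r ≤ c * R ^ (N + 1) / (2 * A * 4 ^ (N + 1))) (hkN : kk ≤ N) :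
    (2 * r) ^ (kk + 1) * (A / (R / 2) ^ (kk + 1)) ≤ c / 2 * r ^ kk := by
  have hA0 : 0 < A := lt_of_lt_of_le one_pos hA
  have hRp : (0:ℝ) < (R / 2) ^ (kk + 1) := pow_pos (by linarith) _
  have hRk : (0:ℝ) < R ^ (kk + 1) := pow_pos hR _
  have key : A * 4 ^ (kk + 1) * r ≤ c / 2 * R ^ (kk + 1) := by
    calc A * 4 ^ (kk + 1) * r ≤ A * 4 ^ (N + 1) * r := by
          gcongr
          all_goals first | norm_num | omega
      _ ≤ A * 4 ^ (N + 1) * (c * R ^ (N + 1) / (2 * A * 4 ^ (N + 1))) := by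
          gcongr
      _ = c / 2 * R ^ (N + 1) := by
          field_simp
      _ ≤ c / 2 * R ^ (kk + 1) :=
          mul_le_mul_of_nonneg_left (pow_le_pow_of_le_one hR.le hR1 (by omega)) (by linarith)
  calc (2 * r) ^ (kk + 1) * (A / (R / 2) ^ (kk + 1))
      = (A * 4 ^ (kk + 1) * r) * r ^ kk / R ^ (kk + 1) := by
        have h4 : (4:ℝ) ^ (kk + 1) = 2 ^ (kk + 1) * 2 ^ (kk + 1) := by
          rw [show (4:ℝ) = 2 * 2 by norm_num, mul_pow]
        rw [h4, mul_pow, div_pow]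
        field_simp
        ring
    _ ≤ (c / 2 * R ^ (kk + 1)) * r ^ kk / R ^ (kk + 1) := by gcongr
    _ = c / 2 * r ^ kk := by field_simp


/-- Factor out a nodup list of zeros of a differentiable function on an open set. -/
lemma factor_list_zeros {U : Set ℂ} (hU : IsOpen U) :
    ∀ (L : List ℂ) (f : ℂ → ℂ), DifferentiableOn ℂ f U → L.Nodup →
    (∀ a ∈ L, a ∈ U) → (∀ a ∈ L, f a = 0) →
    ∃ h : ℂ → ℂ, DifferentiableOn ℂ h U ∧
      ∀ z ∈ U, f z = (L.map (fun a => z - a)).prod * h z := by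
  intro L
  induction L with
  | nil => intro f hf _ _ _; exact ⟨f, hf, fun z _ => by simp⟩
  | cons a L ih =>
    intro f hf hnd hLU hLz
    have haU : a ∈ U := hLU a (by simp)
    have ha0 : f a = 0 := hLz a (by simp)
    set f₁ : ℂ → ℂ := dslope f a with hf₁
    have hfe : ∀ z, f z = (z - a) * f₁ z := by
      intro z
      have := sub_smul_dslope f a z
      rw [smul_eq_mul] at this
      rw [hf₁, this, ha0, sub_zero]
    have hdf₁ : DifferentiableOn ℂ f₁ U :=
      (Complex.differentiableOn_dslope (hU.mem_nhds haU)).mpr hf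
    have hnd' := List.nodup_cons.mp hnd
    obtain ⟨h, hh, hhe⟩ := ih f₁ hdf₁ hnd'.2 (fun b hb => hLU b (by simp [hb]))
      (fun b hb => by
        have hb0 := hLz b (by simp [hb])
        have hba : b ≠ a := fun hba => hnd'.1 (hba ▸ hb)
        have := hfe b
        rw [hb0] at this
        rcases mul_eq_zero.mp this.symm with h1 | h2
        · exact absurd (sub_eq_zero.mp h1) hba
        · exact h2)
    refine ⟨h, hh, fun z hz => ?_⟩
    rw [hfe z, hhe z hz, List.map_cons, List.prod_cons]
    ring

lemma list_prod_norm_le (L : List ℂ) (z : ℂ) (b : ℝ) (hb : 0 ≤ b)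
    (h : ∀ a ∈ L, ‖z - a‖ ≤ b) :
    ‖(L.map (fun a => z - a)).prod‖ ≤ b ^ L.length := by
  induction L with
  | nil => simp
  | cons a L ih =>
    simp only [List.map_cons, List.prod_cons, List.length_cons, norm_mul, pow_succ]
    rw [mul_comm (b ^ L.length) b]
    exact mul_le_mul (h a (by simp)) (ih fun c hc => h c (by simp [hc])) (norm_nonneg _)
      hb

lemma le_list_prod_norm (L : List ℂ) (z : ℂ) (b : ℝ) (hb : 0 ≤ b)
    (h : ∀ a ∈ L, b ≤ ‖z - a‖) :
    b ^ L.length ≤ ‖(L.map (fun a => z - a)).prod‖ := by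
  induction L with
  | nil => simp
  | cons a L ih =>
    simp only [List.map_cons, List.prod_cons, List.length_cons, norm_mul, pow_succ]
    rw [mul_comm (b ^ L.length) b]
    exact mul_le_mul (h a (by simp)) (ih fun c hc => h c (by simp [hc])) (pow_nonneg hb _)
      (norm_nonneg _)

/-- uniform positive constant over a finite set -/
lemma finset_exists_pos {α : Type*} (Z : Finset α) (P : α → ℝ → Prop)
    (mono : ∀ a r r', 0 < r' → r' ≤ r → P a r → P a r')
    (h : ∀ a ∈ Z, ∃ c > 0, P a c) : ∃ c > 0, ∀ a ∈ Z, P a c := by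
  classical
  induction Z using Finset.induction with
  | empty => exact ⟨1, one_pos, by simp⟩
  | @insert a s hni ih =>
    obtain ⟨c₁, hc₁, hP₁⟩ := h a (Finset.mem_insert_self a s)
    obtain ⟨c₂, hc₂, hP₂⟩ := ih fun b hb => h b (Finset.mem_insert_of_mem hb)
    refine ⟨min c₁ c₂, lt_min hc₁ hc₂, fun b hb => ?_⟩
    rcases Finset.mem_insert.mp hb with rfl | hb
    · exact mono b c₁ _ (lt_min hc₁ hc₂) (min_le_left _ _) hP₁
    · exact mono b c₂ _ (lt_min hc₁ hc₂) (min_le_right _ _) (hP₂ b hb)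

set_option maxHeartbeats 1000000 in
/-- If d(z,ε) = z + ε^n·M(z) + O(ε^{n+1}) uniformly on a compact K, M analytic and not
identically zero on a connected open neighborhood V of K, with exactly N zeros (with
multiplicity, encoded by a factorization) in the interior of K and none on the boundary,
then for all sufficiently small ε ≠ 0 the map z ↦ d(z,ε) − z has at most N zeros in the
interior of K. -/
theorem zeros_bound_by_leading_term
    (K : Set ℂ) (hK : IsCompact K) (hKint : (K = closure (interior K)))
    (V : Set ℂ) (hVo : IsOpen V) (hVc : IsConnected V) (hKV : K ⊆ V)
    (M : ℂ → ℂ) (hM : AnalyticOnNhd ℂ M V) (hMne : ∃ z ∈ V, M z ≠ 0)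
    (N : ℕ) (Z : Finset ℂ) (k : ℂ → ℕ) (g : ℂ → ℂ)
    (hZ : ∀ z ∈ K, (M z = 0 ↔ z ∈ Z)) (hZint : ↑Z ⊆ interior K)
    (hg : AnalyticOnNhd ℂ g V) (hgne : ∀ z ∈ K, g z ≠ 0)
    (hfac : ∀ z ∈ K, M z = (∏ w ∈ Z, (z - w) ^ k w) * g z)
    (hsum : ∑ w ∈ Z, k w = N)
    (n : ℕ) (hn : 1 ≤ n)
    (d : ℂ → ℝ → ℂ) (ε₀ C : ℝ) (hε₀ : 0 < ε₀)
    (hd : ∀ ε : ℝ, |ε| < ε₀ → AnalyticOnNhd ℂ (fun z => d z ε) V)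
    (happrox : ∀ ε : ℝ, |ε| < ε₀ → ∀ z ∈ K,
      ‖d z ε - (z + (ε : ℂ) ^ n * M z)‖ ≤ C * |ε| ^ (n + 1)) :
    ∃ ε₁ > 0, ∀ ε : ℝ, 0 < |ε| → |ε| < ε₁ →
      {z ∈ interior K | d z ε = z}.ncard ≤ N := by
  classical
  -- bound on M over K
  obtain ⟨A₀, hA₀⟩ := hK.exists_bound_of_continuousOn (hM.continuousOn.mono hKV)
  set A : ℝ := max A₀ 0 + 1 with hA_def
  have hA1 : 1 ≤ A := by
    have : (0:ℝ) ≤ max A₀ 0 := le_max_right _ _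
    simp only [hA_def]; linarith
  have hA0' : 0 < A := lt_of_lt_of_le one_pos hA1
  have hMA : ∀ z ∈ K, ‖M z‖ + 1 ≤ A := fun z hz => by
    have := hA₀ z hz
    have h2 : A₀ ≤ max A₀ 0 := le_max_left _ _
    simp only [hA_def]; linarith
  -- thickening radius: closed balls around Z inside interior K
  have hZcpt : IsCompact (↑Z : Set ℂ) := Z.finite_toSet.isCompact
  obtain ⟨R₁, hR₁pos, hR₁⟩ := hZcpt.exists_thickening_subset_open isOpen_interior hZint
  -- separation radius
  obtain ⟨ρs, hρs, hsep'⟩ := finset_exists_pos Z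
      (fun w ρ => ∀ w' ∈ Z, w' ≠ w → 3 * ρ ≤ dist w w')
      (fun a r r' _ hle h => fun w' hw' hne => le_trans (by linarith) (h w' hw' hne))
      (fun w _ => by
        apply finset_exists_pos Z (fun w' ρ => w' ≠ w → 3 * ρ ≤ dist w w')
          (fun a r r' _ hle h hne => le_trans (by linarith) (h hne))
        intro w' _
        by_cases hww : w' = w
        · exact ⟨1, one_pos, fun h => absurd hww h⟩
        · exact ⟨dist w w' / 3, by
            have : 0 < dist w w' := dist_pos.mpr (fun h => hww (by
              simpa using h.symm)) 
            linarith, fun _ => by linarith⟩)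
  set R₀ : ℝ := min 1 (min (R₁ / 2) ρs) with hR₀_def
  have hR₀pos : 0 < R₀ := lt_min one_pos (lt_min (by linarith) hρs)
  have hR₀1 : R₀ ≤ 1 := min_le_left _ _
  have hballK : ∀ w ∈ Z, closedBall w R₀ ⊆ interior K := by
    intro w hw x hx
    apply hR₁
    rw [Metric.mem_thickening_iff]
    refine ⟨w, hw, ?_⟩
    have h1 : dist x w ≤ R₀ := mem_closedBall.mp hx
    have h2 : R₀ ≤ R₁ / 2 := le_trans (min_le_right _ _) (min_le_left _ _)
    linarith
  have hsep : ∀ w ∈ Z, ∀ w' ∈ Z, w' ≠ w → 3 * R₀ ≤ dist w w' := by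
    intro w hw w' hw' hne
    have h2 : R₀ ≤ ρs := le_trans (min_le_right _ _) (min_le_right _ _)
    have := hsep' w hw w' hw' hne
    linarith
  -- G function and its lower bound
  set G : ℂ → ℂ → ℂ := fun w z => (∏ w' ∈ Z.erase w, (z - w') ^ k w') * g z with hG_def
  have hGne : ∀ w ∈ Z, ∀ x ∈ closedBall w R₀, G w x ≠ 0 := by
    intro w hw x hx
    apply mul_ne_zero
    · apply Finset.prod_ne_zero_iff.mpr
      intro w' hw'
      apply pow_ne_zero
      rw [sub_ne_zero]
      intro hxe
      have hne : w' ≠ w := Finset.ne_of_mem_erase hw'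
      have := hsep w hw w' (Finset.mem_of_mem_erase hw') hne
      have h1 : dist x w ≤ R₀ := mem_closedBall.mp hx
      rw [hxe] at h1
      rw [dist_comm] at this
      linarith
    · exact hgne x (interior_subset (hballK w hw hx))
  obtain ⟨c, hcpos, hc⟩ := finset_exists_pos Z
      (fun w ρ => ∀ z ∈ closedBall w R₀, ρ ≤ ‖G w z‖)
      (fun a r r' _ hle h => fun z hz => le_trans hle (h z hz))
      (by
        intro w hw
        have hcb : IsCompact (closedBall w R₀) := isCompact_closedBall w R₀
        have hcont : ContinuousOn (fun z => ‖G w z‖) (closedBall w R₀) := by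
          apply ContinuousOn.norm
          apply ContinuousOn.mul
          · exact (continuous_finset_prod _ fun w' _ =>
              (continuous_id.sub continuous_const).pow _).continuousOn
          · exact hg.continuousOn.mono
              (le_trans (hballK w hw) (interior_subset.trans hKV))
        obtain ⟨x, hxmem, hxmin⟩ := hcb.exists_isMinOn
          (nonempty_closedBall.mpr hR₀pos.le) hcont
        exact ⟨‖G w x‖, norm_pos_iff.mpr (hGne w hw x hxmem),
          fun z hz => isMinOn_iff.mp hxmin z hz⟩)
  set R : ℝ := R₀ / 2 with hR_def
  have hRpos : 0 < R := by linarith [hR_def]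
  -- small radius r
  set r : ℝ := min 1 (min (R / 2) (c * R ^ (N + 1) / (2 * A * 4 ^ (N + 1)))) with hr_def
  have hrpos : 0 < r := lt_min one_pos (lt_min (by linarith) (by positivity))
  have hr1 : r ≤ 1 := min_le_left _ _
  have hrR2 : r ≤ R / 2 := le_trans (min_le_right _ _) (min_le_left _ _)
  have hrc : r ≤ c * R ^ (N + 1) / (2 * A * 4 ^ (N + 1)) :=
    le_trans (min_le_right _ _) (min_le_right _ _)
  -- lower bound m for M away from the balls
  set Kout : Set ℂ := K \ ⋃ w ∈ Z, ball w r with hKout_def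
  have hKoutC : IsCompact Kout :=
    hK.diff (isOpen_biUnion fun w _ => isOpen_ball)
  have hMKout : ∀ z ∈ Kout, M z ≠ 0 := by
    intro z hz hMz
    have hzZ : z ∈ Z := (hZ z hz.1).mp hMz
    exact hz.2 (Set.mem_biUnion hzZ (mem_ball_self hrpos))
  obtain ⟨m, hmpos, hm⟩ : ∃ m > 0, ∀ z ∈ Kout, m ≤ ‖M z‖ := by
    rcases Kout.eq_empty_or_nonempty with he | hne
    · exact ⟨1, one_pos, fun z hz => absurd hz (he ▸ Set.notMem_empty z)⟩
    · obtain ⟨x, hxmem, hxmin⟩ := hKoutC.exists_isMinOn hne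
        ((hM.continuousOn.mono (Set.diff_subset.trans hKV)).norm)
      exact ⟨‖M x‖, norm_pos_iff.mpr (hMKout x hxmem),
        fun z hz => isMinOn_iff.mp hxmin z hz⟩
  set C' : ℝ := max C 0 with hC'_def
  have hC'0 : 0 ≤ C' := le_max_right _ _
  set m3 : ℝ := min m (min (c / 2 * r ^ N) 1) with hm3_def
  have hm3pos : 0 < m3 := lt_min hmpos (lt_min (by positivity) one_pos)
  refine ⟨min ε₀ (m3 / (C' + 1)), lt_min hε₀ (by positivity), ?_⟩
  intro ε hεpos hεlt
  have hεε₀ : |ε| < ε₀ := lt_of_lt_of_le hεlt (min_le_left _ _)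
  have hεm3 : (C' + 1) * |ε| < m3 := by
    have h1 : |ε| < m3 / (C' + 1) := lt_of_lt_of_le hεlt (min_le_right _ _)
    rw [lt_div_iff₀ (by positivity)] at h1
    linarith [h1]
  have hCε : C' * |ε| < m3 := by
    have he : C' * |ε| + |ε| = (C' + 1) * |ε| := by ring
    linarith [abs_nonneg ε]
  have hCεm : C' * |ε| < m := lt_of_lt_of_le hCε (min_le_left _ _)
  have hCεr : C' * |ε| < c / 2 * r ^ N :=
    lt_of_lt_of_le hCε (le_trans (min_le_right _ _) (min_le_left _ _))
  have hCε1 : C' * |ε| < 1 :=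
    lt_of_lt_of_le hCε (le_trans (min_le_right _ _) (min_le_right _ _))
  have hεne : (ε : ℂ) ≠ 0 := by
    simp only [ne_eq, Complex.ofReal_eq_zero]
    exact fun h => by simp [h] at hεpos
  have hεnne : ((ε : ℂ)) ^ n ≠ 0 := pow_ne_zero _ hεne
  set F : ℂ → ℂ := fun z => (d z ε - z) / (ε : ℂ) ^ n with hF_def
  set S : Set ℂ := {z ∈ interior K | d z ε = z} with hS_def
  have hSK : S ⊆ K := fun z hz => interior_subset hz.1
  have hSF : ∀ z ∈ S, F z = 0 := by
    intro z hz
    simp only [hF_def, hz.2, sub_self, zero_div]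
  have hFdiff : DifferentiableOn ℂ F V :=
    (((hd ε hεε₀).differentiableOn).sub differentiableOn_id).div_const _
  have hFM : ∀ z ∈ K, ‖F z - M z‖ ≤ C' * |ε| := by
    intro z hz
    have he : F z - M z = (d z ε - (z + (ε : ℂ) ^ n * M z)) / (ε : ℂ) ^ n := by
      field_simp [hF_def]
      rw [hF_def]
      field_simp
      ring
    rw [he, norm_div]
    have hnorm : ‖((ε : ℂ)) ^ n‖ = |ε| ^ n := by
      rw [norm_pow, Complex.norm_real, Real.norm_eq_abs]
    rw [hnorm, div_le_iff₀ (by positivity)]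
    calc ‖d z ε - (z + (ε : ℂ) ^ n * M z)‖ ≤ C * |ε| ^ (n + 1) :=
          happrox ε hεε₀ z hz
      _ ≤ C' * |ε| ^ (n + 1) := by
          apply mul_le_mul_of_nonneg_right (le_max_left _ _) (by positivity)
      _ = C' * |ε| * |ε| ^ n := by ring
  -- localization of zeros
  have hloc : ∀ z ∈ S, ∃ w ∈ Z, z ∈ ball w r := by
    intro z hz
    by_contra hcon
    push_neg at hcon
    have hzout : z ∈ Kout := ⟨hSK hz, by
      simp only [Set.mem_iUnion]
      rintro ⟨w, hw, hball⟩
      exact absurd hball (by simpa using hcon w hw)⟩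
    have h1 : m ≤ ‖M z‖ := hm z hzout
    have h2 : ‖M z‖ ≤ C' * |ε| := by
      have := hFM z (hSK hz)
      rw [hSF z hz] at this
      rwa [zero_sub, norm_neg] at this
    linarith
  -- counting in each ball
  have hcount : ∀ w ∈ Z, ∀ T : Finset ℂ, (↑T ⊆ S) → (∀ t ∈ T, t ∈ ball w r) →
      T.card ≤ k w := by
    intro w hw T hTS hTball
    by_contra hcon
    push_neg at hcon
    obtain ⟨T', hT'sub, hT'card⟩ := Finset.exists_subset_card_eq (s := T) (n := k w + 1) hcon
    set L : List ℂ := T'.toList with hL_def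
    have hLnd : L.Nodup := T'.nodup_toList
    have hLlen : L.length = k w + 1 := by
      rw [hL_def, Finset.length_toList, hT'card]
    have hLmem : ∀ a ∈ L, a ∈ T := fun a ha => hT'sub (Finset.mem_toList.mp ha)
    have hballsub : ball w R₀ ⊆ V := (ball_subset_closedBall.trans
      (hballK w hw)).trans (interior_subset.trans hKV)
    have hcbK : closedBall w R₀ ⊆ K := (hballK w hw).trans interior_subset
    obtain ⟨h, hhd, hhe⟩ := factor_list_zeros isOpen_ball L F
      (hFdiff.mono hballsub) hLnd
      (fun a ha => mem_ball.mpr (lt_of_lt_of_le (mem_ball.mp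
        (hTball a (hLmem a ha))) (by linarith [hR_def, hrR2])))
      (fun a ha => hSF a (hTS (hLmem a ha)))
    set kk := k w with hkk_def
    have hkkN : kk ≤ N := hsum ▸ Finset.single_le_sum (fun i _ => Nat.zero_le _) hw
    set zs : ℂ := w + (r : ℂ) with hzs_def
    have hzsd : dist zs w = r := by
      simp only [hzs_def, dist_eq_norm, add_sub_cancel_left, Complex.norm_real,
        Real.norm_eq_abs, abs_of_pos hrpos]
    have hzsK : zs ∈ K := hcbK (mem_closedBall.mpr (by rw [hzsd]; linarith))
    -- bound for h on the sphere of radius R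
    set B : ℝ := A / (R / 2) ^ (kk + 1) with hB_def
    have hFA : ∀ z ∈ K, ‖F z‖ ≤ A := by
      intro z hz
      calc ‖F z‖ ≤ ‖M z‖ + ‖F z - M z‖ := by
            have := norm_add_le (M z) (F z - M z); simpa using this
        _ ≤ ‖M z‖ + C' * |ε| := by linarith [hFM z hz]
        _ ≤ ‖M z‖ + 1 := by linarith
        _ ≤ A := hMA z hz
    have hsphere : ∀ z ∈ sphere w R, ‖h z‖ ≤ B := by
      intro z hz
      have hzd : dist z w = R := mem_sphere.mp hz
      have hzball : z ∈ ball w R₀ := mem_ball.mpr (by rw [hzd]; linarith [hR_def])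
      have hzK : z ∈ K := hcbK (ball_subset_closedBall hzball)
      have hPlb : (R / 2) ^ L.length ≤ ‖(L.map (fun a => z - a)).prod‖ := by
        apply le_list_prod_norm L z (R / 2) (by linarith)
        intro a ha
        have had : dist a w < r := mem_ball.mp (hTball a (hLmem a ha))
        have := dist_triangle z a w
        rw [← dist_eq_norm]
        rw [dist_comm a w] at had
        linarith [dist_triangle z w a, dist_comm w a ▸ had, hzd]
      have hPpos : (0:ℝ) < ‖(L.map (fun a => z - a)).prod‖ :=
        lt_of_lt_of_le (by positivity) hPlb
      have hFz : F z = (L.map (fun a => z - a)).prod * h z := hhe z hzball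
      rw [hB_def, le_div_iff₀ (by positivity)]
      calc ‖h z‖ * (R / 2) ^ (kk + 1) ≤ ‖h z‖ * ‖(L.map (fun a => z - a)).prod‖ := by
            apply mul_le_mul_of_nonneg_left _ (norm_nonneg _)
            rw [← hLlen]; exact hPlb
        _ = ‖F z‖ := by rw [hFz, norm_mul]; ring
        _ ≤ A := hFA z hzK
    -- maximum modulus
    have hRR₀ : R ≤ R₀ := by linarith [hR_def]
    have hhzs : ‖h zs‖ ≤ B := by
      have hdc : DiffContOnCl ℂ h (ball w R) := by
        refine ⟨hhd.mono (ball_subset_ball hRR₀), ?_⟩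
        rw [closure_ball w hRpos.ne']
        apply (hhd.continuousOn).mono
        intro x hx
        exact mem_ball.mpr (lt_of_le_of_lt (mem_closedBall.mp hx)
          (by linarith [hR_def]))
      have hfr : ∀ z ∈ frontier (ball w R), ‖h z‖ ≤ B := by
        rw [frontier_ball w hRpos.ne']
        exact hsphere
      have hmem : zs ∈ closure (ball w R) := by
        rw [closure_ball w hRpos.ne']
        exact mem_closedBall.mpr (by rw [hzsd]; linarith)
      exact Complex.norm_le_of_forall_mem_frontier_norm_le isBounded_ball hdc hfr hmem
    -- upper bound on ‖F zs‖
    have hzsball : zs ∈ ball w R₀ := mem_ball.mpr (by rw [hzsd]; linarith [hR_def])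
    have hFub : ‖F zs‖ ≤ (2 * r) ^ (kk + 1) * B := by
      have hFzs : F zs = (L.map (fun a => zs - a)).prod * h zs := hhe zs hzsball
      rw [hFzs, norm_mul]
      apply mul_le_mul _ hhzs (norm_nonneg _) (by positivity)
      rw [← hLlen]
      apply list_prod_norm_le L zs (2 * r) (by linarith)
      intro a ha
      have had : dist a w < r := mem_ball.mp (hTball a (hLmem a ha))
      rw [← dist_eq_norm]
      calc dist zs a ≤ dist zs w + dist w a := dist_triangle _ _ _
        _ ≤ r + r := by rw [hzsd, dist_comm]; linarith
        _ = 2 * r := by ring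
    -- lower bound on ‖F zs‖
    have hMzs : M zs = (zs - w) ^ kk * G w zs := by
      rw [hfac zs hzsK, ← Finset.mul_prod_erase _ _ hw, hG_def]
      ring
    have hMlb : c * r ^ kk ≤ ‖M zs‖ := by
      rw [hMzs, norm_mul, norm_pow]
      have h1 : ‖zs - w‖ = r := by rw [← dist_eq_norm]; exact hzsd
      rw [h1, mul_comm]
      apply mul_le_mul_of_nonneg_left _ (by positivity)
      exact hc w hw zs (mem_closedBall.mpr (by rw [hzsd]; linarith))
    have hFlb : c / 2 * r ^ kk < ‖F zs‖ := by
      have h1 : ‖M zs‖ - ‖F zs - M zs‖ ≤ ‖F zs‖ := by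
        have := norm_sub_norm_le (F zs) (M zs)
        have h2 := norm_sub_rev (F zs) (M zs)
        linarith [abs_le.mp (abs_norm_sub_norm_le (F zs) (M zs))]
      have h2 : ‖F zs - M zs‖ ≤ C' * |ε| := hFM zs hzsK
      have h3 : r ^ N ≤ r ^ kk := pow_le_pow_of_le_one hrpos.le hr1 hkkN
      have h4 : C' * |ε| < c / 2 * r ^ kk := by
        calc C' * |ε| < c / 2 * r ^ N := hCεr
          _ ≤ c / 2 * r ^ kk := by
              apply mul_le_mul_of_nonneg_left h3 (by linarith)
      calc c / 2 * r ^ kk = c * r ^ kk - c / 2 * r ^ kk := by ring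
        _ < ‖M zs‖ - ‖F zs - M zs‖ := by linarith [hMlb, h2, h4]
        _ ≤ ‖F zs‖ := h1
    -- contradiction via key_ineq
    have hki := key_ineq A c r R N kk hA1 hcpos hRpos
      (by linarith [hR_def]) hrpos hrc hkkN
    rw [← hB_def] at hki
    linarith [hFub, hFlb, hki]
  -- final counting
  have hTcard : ∀ T : Finset ℂ, (↑T ⊆ S) → T.card ≤ N := by
    intro T hTS
    have hsub : T ⊆ Z.biUnion (fun w => T.filter (fun z => z ∈ ball w r)) := by
      intro t ht
      obtain ⟨w, hw, hball⟩ := hloc t (hTS ht)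
      exact Finset.mem_biUnion.mpr ⟨w, hw, Finset.mem_filter.mpr ⟨ht, hball⟩⟩
    calc T.card ≤ (Z.biUnion (fun w => T.filter (fun z => z ∈ ball w r))).card :=
          Finset.card_le_card hsub
      _ ≤ ∑ w ∈ Z, (T.filter (fun z => z ∈ ball w r)).card :=
          Finset.card_biUnion_le
      _ ≤ ∑ w ∈ Z, k w := by
          apply Finset.sum_le_sum
          intro w hw
          apply hcount w hw
          · intro z hz
            exact hTS (Finset.mem_coe.mpr (Finset.mem_of_mem_filter z
              (Finset.mem_coe.mp hz)))
          · intro t ht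
            exact (Finset.mem_filter.mp ht).2
      _ = N := hsum
  by_cases hfin : S.Finite
  · rw [Set.ncard_eq_toFinset_card S hfin]
    exact hTcard hfin.toFinset (by simp)
  · rw [Set.Infinite.ncard hfin]
    exact Nat.zero_le _
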